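/- arXiv:2110.01453 — 3 statements merged into one kernel-verified Lean document; each statement's English description precedes it below -/
import Mathlib

section
/- Let R, σ², q, T > 0 and suppose (2^R - 1)·σ² < q/T. Then the function f(τ) = ((1-τ)/τ)·(2^{R/(1-τ)} - 1)·σ² - q/(T·τ) is strictly monotonically increasing on (0,1). -/
open Set Real

lemma key_ineq (u : ℝ) (hu : 0 ≤ u) : (2:ℝ) ^ u * (1 - u * Real.log 2) ≤ 1 := by
  have h2 : (2:ℝ) ^ u = Real.exp (u * Real.log 2) := by
    rw [Real.rpow_def_of_pos (by norm_num)]; ring_nf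
  have hx : 1 - u * Real.log 2 ≤ Real.exp (-(u * Real.log 2)) := by
    linarith [Real.add_one_le_exp (-(u * Real.log 2))]
  calc (2:ℝ) ^ u * (1 - u * Real.log 2)
      ≤ Real.exp (u * Real.log 2) * Real.exp (-(u * Real.log 2)) := by
        rw [h2]; exact mul_le_mul_of_nonneg_left hx (Real.exp_pos _).le
    _ = 1 := by rw [← Real.exp_add]; simp

lemma hasDeriv (R σ q T τ : ℝ) (hT : 0 < T) (hτ0 : 0 < τ) (hτ1 : τ < 1) :
    HasDerivAt (fun τ : ℝ => ((1 - τ) / τ) * ((2:ℝ) ^ (R / (1 - τ)) - 1) * σ - q / (T * τ))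
      ((-(1/τ^2)) * ((2:ℝ) ^ (R / (1 - τ)) - 1) * σ
        + ((1 - τ)/τ) * ((2:ℝ) ^ (R / (1 - τ)) * Real.log 2 * (R/(1-τ)^2)) * σ
        + q / T * (1/τ^2)) τ := by
  have h1τ : (1 : ℝ) - τ ≠ 0 := by linarith
  have hτ : τ ≠ 0 := hτ0.ne'
  have hA : HasDerivAt (fun τ : ℝ => (1 - τ) / τ) (-(1/τ^2)) τ := by
    have := ((hasDerivAt_id τ).const_sub 1).div (hasDerivAt_id τ) hτ
    refine this.congr_deriv ?_
    simp only [id]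
    field_simp
    ring
  have hB : HasDerivAt (fun τ : ℝ => R / (1 - τ)) (R/(1-τ)^2) τ := by
    have := (hasDerivAt_const τ R).div ((hasDerivAt_id τ).const_sub 1) h1τ
    refine this.congr_deriv ?_
    simp only [id]
    field_simp
    ring
  have hE : HasDerivAt (fun τ : ℝ => (2:ℝ) ^ (R / (1 - τ)))
      ((2:ℝ) ^ (R / (1 - τ)) * Real.log 2 * (R/(1-τ)^2)) τ := by
    have := ((Real.hasStrictDerivAt_const_rpow (by norm_num : (0:ℝ) < 2)
      (R / (1 - τ))).hasDerivAt).comp τ hB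
    exact this
  have hC : HasDerivAt (fun τ : ℝ => q / (T * τ)) (-(q / T * (1/τ^2))) τ := by
    have := (hasDerivAt_const τ q).div ((hasDerivAt_id τ).const_mul T) (mul_ne_zero hT.ne' hτ)
    have hT' : T ≠ 0 := hT.ne'
    refine this.congr_deriv ?_
    simp only [id]
    field_simp
    ring
  have := ((hA.mul (hE.sub_const 1)).mul_const σ).sub hC
  refine this.congr_deriv ?_
  ring

lemma deriv_pos (R σ q T τ : ℝ) (hR : 0 < R) (hσ : 0 < σ) (hq : 0 < q) (hT : 0 < T)
    (hcond : ((2:ℝ) ^ R - 1) * σ < q / T) (hτ0 : 0 < τ) (hτ1 : τ < 1) :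
    0 < (-(1/τ^2)) * ((2:ℝ) ^ (R / (1 - τ)) - 1) * σ
        + ((1 - τ)/τ) * ((2:ℝ) ^ (R / (1 - τ)) * Real.log 2 * (R/(1-τ)^2)) * σ
        + q / T * (1/τ^2) := by
  have h1τ : (0:ℝ) < 1 - τ := by linarith
  have hτ : τ ≠ 0 := hτ0.ne'
  have hT' : T ≠ 0 := hT.ne'
  set u : ℝ := τ * R / (1 - τ) with hu_def
  have hu : 0 ≤ u := by positivity
  have hs : R / (1 - τ) = R + u := by
    rw [hu_def]; field_simp; ring
  have hE : (2:ℝ) ^ (R / (1 - τ)) = 2 ^ R * 2 ^ u := by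
    rw [hs, Real.rpow_add (by norm_num : (0:ℝ) < 2)]
  have hkey := key_ineq u hu
  have h2R : (0:ℝ) < (2:ℝ) ^ R := Real.rpow_pos_of_pos (by norm_num) R
  have hkey2 : (2:ℝ) ^ (R / (1 - τ)) - u * Real.log 2 * (2:ℝ) ^ (R / (1 - τ)) ≤ 2 ^ R := by
    rw [hE]; nlinarith
  have hnum : 0 < q / T + (u * Real.log 2 * (2:ℝ) ^ (R / (1 - τ))
      - ((2:ℝ) ^ (R / (1 - τ)) - 1)) * σ := by nlinarith
  have hDeq : (-(1/τ^2)) * ((2:ℝ) ^ (R / (1 - τ)) - 1) * σ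
        + ((1 - τ)/τ) * ((2:ℝ) ^ (R / (1 - τ)) * Real.log 2 * (R/(1-τ)^2)) * σ
        + q / T * (1/τ^2)
      = (q / T + (u * Real.log 2 * (2:ℝ) ^ (R / (1 - τ))
          - ((2:ℝ) ^ (R / (1 - τ)) - 1)) * σ) / τ^2 := by
    rw [hu_def]
    field_simp
    ring
  rw [hDeq]
  positivity

theorem stmt_2 (R σ q T : ℝ) (hR : 0 < R) (hσ : 0 < σ) (hq : 0 < q) (hT : 0 < T)
    (hcond : ((2:ℝ) ^ R - 1) * σ < q / T) :
    StrictMonoOn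
      (fun τ : ℝ => ((1 - τ) / τ) * ((2:ℝ) ^ (R / (1 - τ)) - 1) * σ - q / (T * τ))
      (Set.Ioo 0 1) := by
  apply strictMonoOn_of_deriv_pos (convex_Ioo 0 1)
  · intro x hx
    exact (hasDeriv R σ q T x hT hx.1 hx.2).continuousAt.continuousWithinAt
  · intro x hx
    rw [interior_Ioo] at hx
    rw [(hasDeriv R σ q T x hT hx.1 hx.2).deriv]
    exact deriv_pos R σ q T x hR hσ hq hT hcond hx.1 hx.2
end

section
/- Let R, σ², q, T > 0 with (2^R - 1)·σ² > q/T. Define f(τ) = ((1-τ)/τ)·(2^{R/(1-τ)} - 1)·σ² - q/(T·τ) on (0,1). Then f is convex on (0,1), i.e., its second derivative is positive on (0,1). -/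
open Set Real

lemma my_exp_neg_le (x : ℝ) (hx : 0 ≤ x) : Real.exp (-x) ≤ 1 - x + x^2/2 := by
  have h1 : 1 + x + x ^ 2 / 2 ≤ Real.exp x := Real.quadratic_le_exp_of_nonneg hx
  have h2 : Real.exp (-x) * Real.exp x = 1 := by rw [← Real.exp_add]; simp
  nlinarith [Real.exp_pos (-x), sq_nonneg (x^2), Real.exp_pos x]

lemma my_hasDeriv_exp (c τ : ℝ) (h1 : (1:ℝ) - τ ≠ 0) :
    HasDerivAt (fun t => Real.exp (c/(1-t))) (Real.exp (c/(1-τ)) * (c/(1-τ)^2)) τ := by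
  have h1t : HasDerivAt (fun t : ℝ => 1 - t) (-1) τ := by
    simpa using (hasDerivAt_id τ).const_sub 1
  have hinv : HasDerivAt (fun t : ℝ => c/(1-t)) (c/(1-τ)^2) τ := by
    have := (hasDerivAt_const τ c).div h1t h1
    refine this.congr_deriv ?_
    field_simp
    ring
  exact hinv.exp

lemma my_hasDeriv_F (σ q T c τ : ℝ) (hT : T ≠ 0) (h0 : τ ≠ 0) (h1 : (1:ℝ) - τ ≠ 0) :
    HasDerivAt (fun t => ((1 - t)/t) * (Real.exp (c/(1-t)) - 1) * σ - q/(T*t))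
      (σ * (-(Real.exp (c/(1-τ)) - 1)/τ^2 + c * Real.exp (c/(1-τ))/(τ*(1-τ))) + q/(T*τ^2)) τ := by
  have h1t : HasDerivAt (fun t : ℝ => 1 - t) (-1) τ := by
    simpa using (hasDerivAt_id τ).const_sub 1
  have hE := my_hasDeriv_exp c τ h1
  have hr : HasDerivAt (fun t : ℝ => (1 - t)/t) ((-1*τ - (1-τ)*1)/τ^2) τ :=
    h1t.div (hasDerivAt_id τ) h0
  have hEm : HasDerivAt (fun t => Real.exp (c/(1-t)) - 1)
      (Real.exp (c/(1-τ)) * (c/(1-τ)^2)) τ := hE.sub_const 1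
  have hprod := (hr.mul hEm).mul_const σ
  have hden : HasDerivAt (fun t : ℝ => T * t) T τ := by
    simpa using (hasDerivAt_id τ).const_mul T
  have hqq : HasDerivAt (fun t : ℝ => q/(T*t)) ((0 * (T*τ) - q * T)/(T*τ)^2) τ :=
    (hasDerivAt_const τ q).div hden (mul_ne_zero hT h0)
  have := hprod.sub hqq
  refine this.congr_deriv ?_
  field_simp
  ring

lemma my_hasDeriv_F1 (σ q T c τ : ℝ) (hT : T ≠ 0) (h0 : τ ≠ 0) (h1 : (1:ℝ) - τ ≠ 0) :
    HasDerivAt (fun t => σ * (-(Real.exp (c/(1-t)) - 1)/t^2 + c * Real.exp (c/(1-t))/(t*(1-t))) + q/(T*t^2))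
      (σ*(2*(Real.exp (c/(1-τ))-1)/τ^3 + c^2*Real.exp (c/(1-τ))/(τ*(1-τ)^3)
        - 2*c*Real.exp (c/(1-τ))/(τ^2*(1-τ))) - 2*q/(T*τ^3)) τ := by
  have h1t : HasDerivAt (fun t : ℝ => 1 - t) (-1) τ := by
    simpa using (hasDerivAt_id τ).const_sub 1
  have hE := my_hasDeriv_exp c τ h1
  have hEm : HasDerivAt (fun t => -(Real.exp (c/(1-t)) - 1))
      (-(Real.exp (c/(1-τ)) * (c/(1-τ)^2))) τ := (hE.sub_const 1).neg
  have hsq : HasDerivAt (fun t : ℝ => t^2) (2*τ) τ := by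
    simpa using hasDerivAt_pow 2 τ
  have hterm1 : HasDerivAt (fun t => -(Real.exp (c/(1-t)) - 1)/t^2)
      ((-(Real.exp (c/(1-τ)) * (c/(1-τ)^2)) * τ^2 - -(Real.exp (c/(1-τ)) - 1) * (2*τ))/(τ^2)^2) τ :=
    hEm.div hsq (pow_ne_zero 2 h0)
  have hnum2 : HasDerivAt (fun t => c * Real.exp (c/(1-t)))
      (c * (Real.exp (c/(1-τ)) * (c/(1-τ)^2))) τ := hE.const_mul c
  have hden2 : HasDerivAt (fun t : ℝ => t*(1-t)) (1*(1-τ) + τ*(-1)) τ :=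
    (hasDerivAt_id τ).mul h1t
  have hterm2 : HasDerivAt (fun t => c * Real.exp (c/(1-t))/(t*(1-t)))
      ((c * (Real.exp (c/(1-τ)) * (c/(1-τ)^2)) * (τ*(1-τ)) - c * Real.exp (c/(1-τ)) * (1*(1-τ) + τ*(-1)))/(τ*(1-τ))^2) τ :=
    hnum2.div hden2 (mul_ne_zero h0 h1)
  have hmain := ((hterm1.add hterm2).const_mul σ)
  have hdenq : HasDerivAt (fun t : ℝ => T * t^2) (T * (2*τ)) τ := hsq.const_mul T
  have hqq : HasDerivAt (fun t : ℝ => q/(T*t^2)) ((0 * (T*τ^2) - q * (T*(2*τ)))/(T*τ^2)^2) τ :=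
    (hasDerivAt_const τ q).div hdenq (mul_ne_zero hT (pow_ne_zero 2 h0))
  refine (hmain.add hqq).congr_deriv ?_
  field_simp
  ring

theorem stmt_4 (R σ q T : ℝ) (hR : 0 < R) (hσ : 0 < σ) (hq : 0 < q) (hT : 0 < T)
    (hcond : q / T < ((2:ℝ) ^ R - 1) * σ)
    (f : ℝ → ℝ)
    (hf : ∀ τ ∈ Set.Ioo (0:ℝ) 1,
      f τ = ((1 - τ) / τ) * ((2:ℝ) ^ (R / (1 - τ)) - 1) * σ - q / (T * τ)) :
    ConvexOn ℝ (Set.Ioo 0 1) f ∧ ∀ τ ∈ Set.Ioo (0:ℝ) 1, 0 < iteratedDeriv 2 f τ := by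
  set c : ℝ := R * Real.log 2 with hc
  have hcpos : 0 < c := mul_pos hR (Real.log_pos (by norm_num))
  set F : ℝ → ℝ := fun t => ((1 - t)/t) * (Real.exp (c/(1-t)) - 1) * σ - q/(T*t) with hF
  set F1 : ℝ → ℝ := fun t =>
    σ * (-(Real.exp (c/(1-t)) - 1)/t^2 + c * Real.exp (c/(1-t))/(t*(1-t))) + q/(T*t^2) with hF1
  set F2 : ℝ → ℝ := fun t =>
    σ*(2*(Real.exp (c/(1-t))-1)/t^3 + c^2*Real.exp (c/(1-t))/(t*(1-t)^3)
      - 2*c*Real.exp (c/(1-t))/(t^2*(1-t))) - 2*q/(T*t^3) with hF2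
  have h2R : ∀ y : ℝ, (2:ℝ) ^ y = Real.exp (Real.log 2 * y) := fun y =>
    Real.rpow_def_of_pos (by norm_num) y
  have hfF : ∀ t ∈ Ioo (0:ℝ) 1, f t = F t := by
    intro t ht
    rw [hf t ht, h2R]
    simp only [hF]
    congr 2
    rw [hc]; ring
  -- f has derivative F1 at each point of Ioo 0 1
  have hdf : ∀ t ∈ Ioo (0:ℝ) 1, HasDerivAt f (F1 t) t := by
    intro t ht
    have h0 : t ≠ 0 := ne_of_gt ht.1
    have h1 : (1:ℝ) - t ≠ 0 := by have := ht.2; intro h; linarith [sub_eq_zero.mp h]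
    exact (my_hasDeriv_F σ q T c t (ne_of_gt hT) h0 h1).congr_of_eventuallyEq
      (Filter.eventuallyEq_of_mem (isOpen_Ioo.mem_nhds ht) hfF)
  have hdf1 : ∀ t ∈ Ioo (0:ℝ) 1, HasDerivAt (deriv f) (F2 t) t := by
    intro t ht
    have h0 : t ≠ 0 := ne_of_gt ht.1
    have h1 : (1:ℝ) - t ≠ 0 := by have := ht.2; intro h; linarith [sub_eq_zero.mp h]
    exact (my_hasDeriv_F1 σ q T c t (ne_of_gt hT) h0 h1).congr_of_eventuallyEq
      (Filter.eventuallyEq_of_mem (isOpen_Ioo.mem_nhds ht) (fun s hs => (hdf s hs).deriv))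
  -- positivity of F2
  have hqc : q / T < σ * (Real.exp c - 1) := by
    have : (2:ℝ) ^ R = Real.exp c := by rw [h2R]; congr 1; rw [hc]; ring
    rw [this] at hcond; linarith
  have hpos : ∀ t ∈ Ioo (0:ℝ) 1, 0 < F2 t := by
    intro t ht
    have h0 : 0 < t := ht.1
    have hu : 0 < 1 - t := by linarith [ht.2]
    set u : ℝ := 1 - t with hu'
    set x : ℝ := c * t / u with hx'
    set E : ℝ := Real.exp (c / u) with hE'
    have hEpos : 0 < E := Real.exp_pos _
    have hxpos : 0 < x := by positivity
    have hEc : Real.exp c = E * Real.exp (-x) := by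
      rw [hE', ← Real.exp_add]
      congr 1
      rw [hx']
      field_simp
      rw [hu']; ring
    have hE1 : Real.exp c ≤ E * (1 - x + x^2/2) := by
      rw [hEc]
      exact mul_le_mul_of_nonneg_left (my_exp_neg_le x hxpos.le) hEpos.le
    have hb : 0 < 2*σ*(E-1) - 2*(q/T) + σ*E*(x^2 - 2*x) := by
      nlinarith [mul_le_mul_of_nonneg_left hE1 (by positivity : (0:ℝ) ≤ 2*σ)]
    have hsplit : x^2/u = x^2 + x^2*(t/u) := by
      field_simp
      rw [hu']; ring
    have hnum : 0 < 2*σ*(E-1) - 2*(q/T) + σ*E*(x^2/u - 2*x) := by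
      have h3 : 0 ≤ σ*E*(x^2*(t/u)) := by positivity
      have h4 : σ*E*(x^2/u - 2*x) = σ*E*(x^2 - 2*x) + σ*E*(x^2*(t/u)) := by
        rw [hsplit]; ring
      linarith [hb, h3]
    have heq : F2 t = (2*σ*(E-1) - 2*(q/T) + σ*E*(x^2/u - 2*x))/t^3 := by
      simp only [hF2, hE', hx', hu']
      have hu1 : (1:ℝ) - t ≠ 0 := ne_of_gt hu
      field_simp
      ring
    rw [heq]
    exact div_pos hnum (by positivity)
  constructor
  · apply convexOn_of_hasDerivWithinAt2_nonneg (convex_Ioo 0 1) (f' := F1) (f'' := F2)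
    · intro t ht
      exact (hdf t ht).continuousAt.continuousWithinAt
    · rw [interior_Ioo]
      intro t ht
      exact (hdf t ht).hasDerivWithinAt
    · rw [interior_Ioo]
      intro t ht
      have h0 : t ≠ 0 := ne_of_gt ht.1
      have h1 : (1:ℝ) - t ≠ 0 := by have := ht.2; intro h; linarith [sub_eq_zero.mp h]
      exact (my_hasDeriv_F1 σ q T c t (ne_of_gt hT) h0 h1).hasDerivWithinAt
    · rw [interior_Ioo]
      intro t ht
      exact (hpos t ht).le
  · intro t ht
    have : iteratedDeriv 2 f t = deriv (deriv f) t := by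
      rw [show (2:ℕ) = 1 + 1 from rfl, iteratedDeriv_succ, iteratedDeriv_one]
    rw [this, (hdf1 t ht).deriv]
    exact hpos t ht
end

section
/- Let R, σ², q, T > 0 with (2^R - 1)·σ² > q/T, and let f(τ) = ((1-τ)/τ)·(2^{R/(1-τ)} - 1)·σ² - q/(T·τ) on (0,1). Then f(τ) → +∞ as τ → 0⁺ and as τ → 1⁻, and f attains a positive minimum at some interior point τ* ∈ (0,1). -/
open Filter Set Real

-- convexity helper: for 0 < u ≤ 1, 2^R - 1 ≤ u * (2^(R/u) - 1)
lemma aux_convex (R u : ℝ) (hu0 : 0 < u) (hu1 : u ≤ 1) :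
    (2:ℝ) ^ R - 1 ≤ u * ((2:ℝ) ^ (R / u) - 1) := by
  have h2 : (0:ℝ) < 2 := by norm_num
  have key := convexOn_exp.2 (mem_univ (Real.log 2 * (R / u))) (mem_univ (0:ℝ))
    (le_of_lt hu0) (by linarith : (0:ℝ) ≤ 1 - u) (by ring)
  simp only [smul_eq_mul, mul_zero, add_zero, Real.exp_zero] at key
  have hrw : u * (Real.log 2 * (R / u)) = Real.log 2 * R := by
    field_simp
  rw [hrw] at key
  rw [Real.rpow_def_of_pos h2, Real.rpow_def_of_pos h2]
  nlinarith [key]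

-- tendsto helper: u * 2^(R/u) → ∞ as u → 0⁺
lemma aux_tendsto (R : ℝ) (hR : 0 < R) :
    Tendsto (fun u : ℝ => u * (2:ℝ) ^ (R / u)) (nhdsWithin 0 (Set.Ioi 0)) atTop := by
  set c := R * Real.log 2 with hc_def
  have hc : 0 < c := mul_pos hR (Real.log_pos one_lt_two)
  have key : Tendsto (fun y : ℝ => c * (Real.exp y / y)) atTop atTop := by
    have := (Real.tendsto_exp_div_pow_atTop 1).const_mul_atTop hc
    simpa using this
  have h2 : Tendsto (fun u : ℝ => c / u) (nhdsWithin 0 (Set.Ioi 0)) atTop := by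
    have := tendsto_inv_nhdsGT_zero (𝕜 := ℝ) |>.const_mul_atTop hc
    simpa [div_eq_mul_inv] using this
  have h3 := key.comp h2
  refine h3.congr' ?_
  filter_upwards [self_mem_nhdsWithin] with u hu
  have hu0 : (0:ℝ) < u := hu
  have h2pos : (0:ℝ) < 2 := by norm_num
  have hexp : (2:ℝ) ^ (R / u) = Real.exp (c / u) := by
    rw [Real.rpow_def_of_pos h2pos]
    congr 1
    field_simp [hc_def]; ring
  simp only [Function.comp]
  rw [hexp]
  field_simp

theorem stmt_5 (R σ q T : ℝ) (hR : 0 < R) (hσ : 0 < σ) (hq : 0 < q) (hT : 0 < T)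
    (hcond : q / T < ((2:ℝ) ^ R - 1) * σ)
    (f : ℝ → ℝ)
    (hf : ∀ τ ∈ Set.Ioo (0:ℝ) 1,
      f τ = ((1 - τ) / τ) * ((2:ℝ) ^ (R / (1 - τ)) - 1) * σ - q / (T * τ)) :
    Tendsto f (nhdsWithin 0 (Set.Ioi 0)) atTop ∧
    Tendsto f (nhdsWithin 1 (Set.Iio 1)) atTop ∧
    ∃ τstar ∈ Set.Ioo (0:ℝ) 1, 0 < f τstar ∧ ∀ τ ∈ Set.Ioo (0:ℝ) 1, f τstar ≤ f τ := by
  have h2pos : (0:ℝ) < 2 := by norm_num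
  -- g is the "numerator"
  set g : ℝ → ℝ := fun τ => (1 - τ) * ((2:ℝ) ^ (R / (1 - τ)) - 1) * σ - q / T with hg_def
  have hfg : ∀ τ ∈ Set.Ioo (0:ℝ) 1, f τ = g τ / τ := by
    intro τ hτ
    rw [hf τ hτ, hg_def]
    have hτ0 : τ ≠ 0 := ne_of_gt hτ.1
    field_simp
  -- pointwise positivity
  have hpos : ∀ τ ∈ Set.Ioo (0:ℝ) 1, 0 < f τ := by
    intro τ hτ
    have hu0 : 0 < 1 - τ := by linarith [hτ.2]
    have hu1 : 1 - τ ≤ 1 := by linarith [hτ.1]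
    have hconv := aux_convex R (1 - τ) hu0 hu1
    have hgpos : 0 < g τ := by
      have : ((2:ℝ) ^ R - 1) * σ ≤ (1 - τ) * ((2:ℝ) ^ (R / (1 - τ)) - 1) * σ := by
        nlinarith [hconv]
      rw [hg_def]
      simp only
      linarith
    rw [hfg τ hτ]
    exact div_pos hgpos hτ.1
  -- continuity of g on Iio 1
  have hgcont : ContinuousOn g (Set.Iio (1:ℝ)) := by
    rw [hg_def]
    apply ContinuousOn.sub _ continuousOn_const
    apply ContinuousOn.mul _ continuousOn_const
    apply ContinuousOn.mul (by fun_prop)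
    apply ContinuousOn.sub _ continuousOn_const
    have : ∀ τ ∈ Set.Iio (1:ℝ), (2:ℝ) ^ (R / (1 - τ)) = Real.exp (Real.log 2 * (R / (1 - τ))) := by
      intro τ _; rw [Real.rpow_def_of_pos h2pos]
    refine ContinuousOn.congr ?_ this
    apply Real.continuous_exp.comp_continuousOn
    apply continuousOn_const.mul
    apply continuousOn_const.div (by fun_prop)
    intro τ hτ
    simp only [Set.mem_Iio] at hτ
    intro h; linarith [h]
  -- Part 1: tendsto at 0⁺
  have hL : 0 < ((2:ℝ) ^ R - 1) * σ - q / T := by linarith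
  have part1 : Tendsto f (nhdsWithin 0 (Set.Ioi 0)) atTop := by
    have hg0 : g 0 = ((2:ℝ) ^ R - 1) * σ - q / T := by
      rw [hg_def]; simp
    have hgc : Tendsto g (nhdsWithin 0 (Set.Ioi 0)) (nhds (g 0)) := by
      have := (hgcont.continuousAt (Iio_mem_nhds (by norm_num : (0:ℝ) < 1))).tendsto
      exact this.mono_left nhdsWithin_le_nhds
    rw [hg0] at hgc
    have hmul := hgc.pos_mul_atTop hL tendsto_inv_nhdsGT_zero
    refine hmul.congr' ?_
    have hmem : Set.Ioo (0:ℝ) 1 ∈ nhdsWithin (0:ℝ) (Set.Ioi 0) := by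
      rw [mem_nhdsGT_iff_exists_Ioo_subset]
      exact ⟨1, by norm_num, fun x hx => hx⟩
    filter_upwards [hmem] with τ hτ
    rw [hfg τ hτ, div_eq_mul_inv]
  -- Part 2: tendsto at 1⁻
  have part2 : Tendsto f (nhdsWithin 1 (Set.Iio 1)) atTop := by
    have h3 : Tendsto (fun τ : ℝ => 1 - τ) (nhdsWithin 1 (Set.Iio 1))
        (nhdsWithin 0 (Set.Ioi 0)) := by
      rw [tendsto_nhdsWithin_iff]
      constructor
      · have : Tendsto (fun τ : ℝ => 1 - τ) (nhds 1) (nhds (1 - 1)) :=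
          (continuous_const.sub continuous_id).tendsto 1
        simpa using this.mono_left nhdsWithin_le_nhds
      · filter_upwards [self_mem_nhdsWithin] with τ hτ
        simp only [Set.mem_Iio] at hτ
        simp only [Set.mem_Ioi]; linarith
    have h4 := (aux_tendsto R hR).comp h3
    -- f τ = ((1-τ)*2^(R/(1-τ))) * (σ/τ) + (-(1-τ)*σ/τ - q/(T*τ))
    have hA : Tendsto (fun τ : ℝ => ((1 - τ) * (2:ℝ) ^ (R / (1 - τ))) * (σ / τ))
        (nhdsWithin 1 (Set.Iio 1)) atTop := by
      apply h4.atTop_mul_pos hσ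
      have : Tendsto (fun τ : ℝ => σ / τ) (nhds 1) (nhds (σ / 1)) := by
        apply Tendsto.div tendsto_const_nhds tendsto_id one_ne_zero
      simpa using this.mono_left nhdsWithin_le_nhds
    have hB : Tendsto (fun τ : ℝ => -((1 - τ) * σ / τ) - q / (T * τ))
        (nhdsWithin 1 (Set.Iio 1)) (nhds (-((1 - 1) * σ / 1) - q / (T * 1))) := by
      have : Tendsto (fun τ : ℝ => -((1 - τ) * σ / τ) - q / (T * τ)) (nhds 1)
          (nhds (-((1 - 1) * σ / 1) - q / (T * 1))) := by
        apply Tendsto.sub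
        · apply Tendsto.neg
          exact Tendsto.div (((continuous_const.sub continuous_id).mul continuous_const).tendsto 1)
            tendsto_id one_ne_zero
        · apply Tendsto.div tendsto_const_nhds ((continuous_const.mul continuous_id).tendsto 1)
          simp [ne_of_gt hT]
      exact this.mono_left nhdsWithin_le_nhds
    have hsum := hA.atTop_add hB
    refine hsum.congr' ?_
    have hmem : Set.Ioo (0:ℝ) 1 ∈ nhdsWithin (1:ℝ) (Set.Iio 1) := by
      rw [mem_nhdsLT_iff_exists_Ioo_subset]
      exact ⟨0, by norm_num, fun x hx => hx⟩
    filter_upwards [hmem] with τ hτ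
    rw [hf τ hτ]
    have hτ0 : τ ≠ 0 := ne_of_gt hτ.1
    field_simp
    ring
  refine ⟨part1, part2, ?_⟩
  -- Part 3: existence of minimizer
  have hhalf : (1/2 : ℝ) ∈ Set.Ioo (0:ℝ) 1 := by norm_num
  obtain ⟨a, ha1, ha2⟩ : ∃ a, 0 < a ∧ ∀ τ ∈ Set.Ioo (0:ℝ) a, f (1/2) ≤ f τ := by
    have := part1.eventually_ge_atTop (f (1/2))
    rw [eventually_iff, mem_nhdsGT_iff_exists_Ioo_subset] at this
    obtain ⟨u, hu, hsub⟩ := this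
    exact ⟨u, hu, fun τ hτ => hsub hτ⟩
  obtain ⟨b, hb1, hb2⟩ : ∃ b, b < 1 ∧ ∀ τ ∈ Set.Ioo b (1:ℝ), f (1/2) ≤ f τ := by
    have := part2.eventually_ge_atTop (f (1/2))
    rw [eventually_iff, mem_nhdsLT_iff_exists_Ioo_subset] at this
    obtain ⟨l, hl, hsub⟩ := this
    exact ⟨l, hl, fun τ hτ => hsub hτ⟩
  set a' := min a (1/2 : ℝ) with ha'_def
  set b' := max b (1/2 : ℝ) with hb'_def
  have ha'0 : 0 < a' := lt_min ha1 (by norm_num)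
  have hb'1 : b' < 1 := max_lt hb1 (by norm_num)
  have hsub : Set.Icc a' b' ⊆ Set.Ioo (0:ℝ) 1 := by
    intro x hx
    exact ⟨lt_of_lt_of_le ha'0 hx.1, lt_of_le_of_lt hx.2 hb'1⟩
  have hab : a' ≤ b' := le_trans (min_le_right _ _) (le_max_right _ _)
  have hhalfmem : (1/2 : ℝ) ∈ Set.Icc a' b' := ⟨min_le_right _ _, le_max_right _ _⟩
  -- continuity of f on Icc a' b'
  have hfcont : ContinuousOn f (Set.Icc a' b') := by
    apply ContinuousOn.congr (f := fun τ => g τ / τ)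
    · apply ContinuousOn.div
      · exact hgcont.mono (fun x hx => (hsub hx).2)
      · fun_prop
      · intro x hx
        exact ne_of_gt (hsub hx).1
    · intro τ hτ
      exact hfg τ (hsub hτ)
  obtain ⟨τstar, hτs_mem, hτs_min⟩ :=
    (isCompact_Icc).exists_isMinOn (Set.nonempty_Icc.mpr hab) hfcont
  refine ⟨τstar, hsub hτs_mem, hpos τstar (hsub hτs_mem), ?_⟩
  intro τ hτ
  by_cases hcase : τ ∈ Set.Icc a' b'
  · exact hτs_min hcase
  · have hle : f τstar ≤ f (1/2) := hτs_min hhalfmem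
    rcases not_and_or.mp (Set.mem_Icc.not.mp hcase) with h | h
    · push_neg at h
      have : τ ∈ Set.Ioo (0:ℝ) a := ⟨hτ.1, lt_of_lt_of_le h (min_le_left _ _)⟩
      exact le_trans hle (ha2 τ this)
    · push_neg at h
      have : τ ∈ Set.Ioo b (1:ℝ) := ⟨lt_of_le_of_lt (le_max_left _ _) h, hτ.2⟩
      exact le_trans hle (hb2 τ this)
end
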